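/- Let n ≥ 2 and 1 ≤ k ≤ n. If κ = (κ_1, …, κ_n) ∈ Γ_k, then σ_{k−1}(κ|i) > 0 for every index i (i.e., all the partial derivatives σ_k^{ii} = ∂σ_k/∂κ_i are positive on Γ_k). -/

import Mathlib

open Finset Polynomial

/-- The `k`-th elementary symmetric polynomial of `κ : Fin n → ℝ`. -/
noncomputable def esymm {n : ℕ} (k : ℕ) (κ : Fin n → ℝ) : ℝ :=
  ∑ s ∈ Finset.univ.powersetCard k, ∏ i ∈ s, κ i

/-- `σ_k(κ|i)`: the `k`-th elementary symmetric polynomial of the tuple obtained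
from `κ` by deleting the entry `κ i`. -/
noncomputable def esymmDel {n : ℕ} (k : ℕ) (κ : Fin n → ℝ) (i : Fin n) : ℝ :=
  ∑ s ∈ ({i}ᶜ : Finset (Fin n)).powersetCard k, ∏ j ∈ s, κ j

/-- `σ_k(κ|i,j)`: the `k`-th elementary symmetric polynomial of the tuple obtained
from `κ` by deleting the entries `κ i` and `κ j`. -/
noncomputable def esymmDel2 {n : ℕ} (k : ℕ) (κ : Fin n → ℝ) (i j : Fin n) : ℝ :=
  ∑ s ∈ ({i, j}ᶜ : Finset (Fin n)).powersetCard k, ∏ l ∈ s, κ l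

/-- The Garding cone `Γ_k = {κ : σ_j(κ) > 0 for all 1 ≤ j ≤ k}`. -/
def GardingCone {n : ℕ} (k : ℕ) : Set (Fin n → ℝ) :=
  {κ | ∀ j : ℕ, 1 ≤ j → j ≤ k → 0 < esymm j κ}

lemma esymm_zero' {n : ℕ} (κ : Fin n → ℝ) : esymm 0 κ = 1 := by
  simp [esymm]

lemma esymmDel_zero' {n : ℕ} (κ : Fin n → ℝ) (i : Fin n) : esymmDel 0 κ i = 1 := by
  simp [esymmDel]

lemma esymm_eq_multiset {n : ℕ} (k : ℕ) (κ : Fin n → ℝ) :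
    esymm k κ = (Finset.univ.val.map κ).esymm k :=
  (Finset.esymm_map_val κ _ k).symm

lemma esymmDel_eq_multiset {n : ℕ} (k : ℕ) (κ : Fin n → ℝ) (i : Fin n) :
    esymmDel k κ i = (({i}ᶜ : Finset (Fin n)).val.map κ).esymm k :=
  (Finset.esymm_map_val κ _ k).symm

lemma card_compl_singleton {n : ℕ} (i : Fin n) : ({i}ᶜ : Finset (Fin n)).card = n - 1 := by
  simp [Finset.card_compl]


lemma esymm_split {n : ℕ} (j : ℕ) (hj : 1 ≤ j) (κ : Fin n → ℝ) (i : Fin n) :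
    esymm j κ = esymmDel j κ i + κ i * esymmDel (j - 1) κ i := by
  rw [esymm, ← Finset.sum_filter_add_sum_filter_not (Finset.univ.powersetCard j)
    (fun s => i ∈ s), add_comm]
  congr 1
  · rw [esymmDel]
    apply Finset.sum_congr _ (fun _ _ => rfl)
    ext s
    simp only [Finset.mem_filter, Finset.mem_powersetCard, Finset.subset_compl_comm,
      Finset.singleton_subset_iff, Finset.mem_compl]
    constructor
    · rintro ⟨⟨-, hc⟩, hi⟩
      exact ⟨fun x hx => Finset.mem_compl.mpr (fun hxi => hi (Finset.mem_singleton.mp hxi ▸ hx)), hc⟩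
    · rintro ⟨hsub, hc⟩
      exact ⟨⟨Finset.subset_univ _, hc⟩, fun hi => by simpa using hsub hi⟩
  · rw [esymmDel, Finset.mul_sum]
    refine Finset.sum_nbij' (fun s => s.erase i) (fun t => insert i t) ?_ ?_ ?_ ?_ ?_
    · intro s hs
      simp only [Finset.mem_filter, Finset.mem_powersetCard] at hs
      simp only [Finset.mem_powersetCard]
      constructor
      · intro x hx
        simp only [Finset.mem_compl, Finset.mem_singleton]
        exact (Finset.mem_erase.mp hx).1
      · rw [Finset.card_erase_of_mem hs.2, hs.1.2]
    · intro t ht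
      simp only [Finset.mem_powersetCard] at ht
      have hi : i ∉ t := by
        intro h
        have := ht.1 h
        simp at this
      simp only [Finset.mem_filter, Finset.mem_powersetCard]
      refine ⟨⟨Finset.subset_univ _, ?_⟩, Finset.mem_insert_self _ _⟩
      rw [Finset.card_insert_of_notMem hi, ht.2]
      omega
    · intro s hs
      simp only [Finset.mem_filter] at hs
      exact Finset.insert_erase hs.2
    · intro t ht
      simp only [Finset.mem_powersetCard] at ht
      have hi : i ∉ t := by
        intro h; have := ht.1 h; simp at this
      exact Finset.erase_insert hi
    · intro s hs
      simp only [Finset.mem_filter] at hs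
      exact (Finset.mul_prod_erase s κ hs.2).symm


lemma derivative_step (m : ℕ) (s : Multiset ℝ) (hc : Multiset.card s = m + 1) :
    ∃ u : Multiset ℝ, Multiset.card u = m ∧
      ∀ j ≤ m, ((m : ℝ) + 1) * u.esymm j = ((m : ℝ) + 1 - j) * s.esymm j := by
  set q : Polynomial ℝ := (s.map (fun a => X + C a)).prod with hq
  have hmon : q.Monic :=
    monic_multiset_prod_of_monic s _ (fun a _ => monic_X_add_C a)
  have hdeg : q.natDegree = m + 1 := by
    rw [hq, natDegree_multiset_prod_of_monic _ (fun f hf => by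
      obtain ⟨b, _, rfl⟩ := Multiset.mem_map.mp hf; exact monic_X_add_C b)]
    simp [Multiset.map_map, Function.comp_def, hc]
    omega
  have hroots : q.roots = s.map (fun a => -a) := by
    have h1 : s.map (fun a => X + C a) = (s.map (fun a => -a)).map (fun a => X - C a) := by
      rw [Multiset.map_map]
      apply Multiset.map_congr rfl
      intro x _
      simp [sub_neg_eq_add]
    rw [hq, h1, roots_multiset_prod_X_sub_C]
  have hcr : Multiset.card q.roots = m + 1 := by rw [hroots]; simp [hc]
  have hptop : (derivative q).coeff m = (m : ℝ) + 1 := by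
    rw [coeff_derivative]
    have h2 : q.coeff (m + 1) = 1 := by
      have := hmon.coeff_natDegree
      rwa [hdeg] at this
    rw [h2]; ring
  have hpdeg : (derivative q).natDegree = m := by
    refine le_antisymm ?_ (le_natDegree_of_ne_zero (by rw [hptop]; positivity))
    have := natDegree_derivative_le q
    omega
  have hprc : Multiset.card (derivative q).roots = m := by
    have h1 := q.card_roots_le_derivative
    have h2 := (derivative q).card_roots'
    omega
  have hsplit : derivative q =
      C (derivative q).leadingCoeff * ((derivative q).roots.map (fun a => X - C a)).prod :=
    (C_leadingCoeff_mul_prod_multiset_X_sub_C (by rw [hprc, hpdeg])).symm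
  have hlead : (derivative q).leadingCoeff = (m : ℝ) + 1 := by
    rw [Polynomial.leadingCoeff, hpdeg, hptop]
  refine ⟨(derivative q).roots.map (fun a => -a), by simp [hprc], ?_⟩
  intro j hj
  have hu : (((derivative q).roots.map (fun a => -a)).map (fun a => X + C a)).prod
      = ((derivative q).roots.map (fun a => X - C a)).prod := by
    rw [Multiset.map_map]
    apply congrArg
    apply Multiset.map_congr rfl
    intro x _
    simp [sub_eq_add_neg]
  have e1 : (derivative q).coeff (m - j) = ((m : ℝ) + 1 - j) * s.esymm j := by
    rw [coeff_derivative]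
    have hk : (m - j) + 1 = (m + 1) - j := by omega
    have h3 : q.coeff (m - j + 1) = s.esymm j := by
      rw [hk, hq, Multiset.prod_X_add_C_coeff s (by omega)]
      congr 1
      omega
    rw [h3]
    have h4 : (((m - j : ℕ) : ℝ) + 1) = (m : ℝ) + 1 - j := by
      have : ((m - j : ℕ) : ℝ) = (m : ℝ) - j := by
        push_cast [Nat.cast_sub hj]; ring
      rw [this]; ring
    rw [h4]; ring
  have e2 : (derivative q).coeff (m - j)
      = ((m : ℝ) + 1) * ((derivative q).roots.map (fun a => -a)).esymm j := by
    conv_lhs => rw [hsplit]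
    rw [coeff_C_mul, hlead, ← hu,
      Multiset.prod_X_add_C_coeff _ (by simp only [Multiset.card_map, hprc]; omega)]
    have h5 : Multiset.card ((derivative q).roots.map (fun a => -a)) - (m - j) = j := by
      simp only [Multiset.card_map, hprc]; omega
    rw [h5]
  rw [← e2, e1]

lemma descend (d : ℕ) : ∀ (k : ℕ) (s : Multiset ℝ), Multiset.card s = k + d →
    ∃ u : Multiset ℝ, Multiset.card u = k ∧
      ∀ j ≤ k, ∃ c : ℝ, 0 < c ∧ u.esymm j = c * s.esymm j := by
  induction d with
  | zero =>
    intro k s h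
    exact ⟨s, h, fun j _ => ⟨1, one_pos, (one_mul _).symm⟩⟩
  | succ d ih =>
    intro k s h
    obtain ⟨u, hu, hrel⟩ := derivative_step (k + d) s (by omega)
    obtain ⟨v, hv, hrel2⟩ := ih k u hu
    refine ⟨v, hv, fun j hj => ?_⟩
    obtain ⟨c, hc, he⟩ := hrel2 j hj
    have h3 := hrel j (by omega)
    have hjlt : (j : ℝ) < (k : ℝ) + d + 1 := by
      have : (j : ℝ) ≤ (k : ℝ) := by exact_mod_cast hj
      have hd : (0:ℝ) ≤ (d : ℝ) := by positivity
      linarith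
    have hden : (0:ℝ) < (k : ℝ) + d + 1 := by positivity
    refine ⟨c * (((k : ℝ) + d + 1 - j) / ((k : ℝ) + d + 1)), ?_, ?_⟩
    · have : (0:ℝ) < (k : ℝ) + d + 1 - j := by linarith
      positivity
    · rw [he]
      have hcast : ((k + d : ℕ) : ℝ) = (k : ℝ) + d := by push_cast; ring
      rw [hcast] at h3
      have : u.esymm j = (((k : ℝ) + d + 1 - j) / ((k : ℝ) + d + 1)) * s.esymm j := by
        field_simp
        linarith [h3]
      rw [this]; ring


lemma erase_image_powersetCard {α : Type*} [DecidableEq α] {A : Finset α} {m : ℕ}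
    (hA : A.card = m + 1) : A.powersetCard m = A.image (fun j => A.erase j) := by
  ext t
  simp only [Finset.mem_powersetCard, Finset.mem_image]
  constructor
  · rintro ⟨hsub, hcard⟩
    have h1 : (A \ t).card = 1 := by rw [Finset.card_sdiff_of_subset hsub]; omega
    obtain ⟨a, ha⟩ := Finset.card_eq_one.mp h1
    have haA : a ∈ A ∧ a ∉ t := by
      have : a ∈ A \ t := by rw [ha]; exact Finset.mem_singleton_self a
      simpa using this
    refine ⟨a, haA.1, ?_⟩
    have hsub2 : t ⊆ A.erase a := by
      intro x hx
      refine Finset.mem_erase.mpr ⟨?_, hsub hx⟩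
      rintro rfl
      exact haA.2 hx
    exact (Finset.eq_of_subset_of_card_le hsub2 (by
      rw [Finset.card_erase_of_mem haA.1, hA, hcard]; omega)).symm
  · rintro ⟨a, ha, rfl⟩
    exact ⟨Finset.erase_subset _ _, by rw [Finset.card_erase_of_mem ha, hA]; omega⟩

lemma sum_prod_erase {α : Type*} [DecidableEq α] (lam : α → ℝ) {A : Finset α} {m : ℕ}
    (hA : A.card = m + 1) :
    ∑ t ∈ A.powersetCard m, ∏ l ∈ t, lam l = ∑ j ∈ A, ∏ l ∈ A.erase j, lam l := by
  rw [erase_image_powersetCard hA, Finset.sum_image]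
  intro x hx y hy hxy
  by_contra hne
  have hmem : x ∈ A.erase y := Finset.mem_erase.mpr ⟨hne, hx⟩
  rw [← show A.erase x = A.erase y from hxy] at hmem
  exact (Finset.mem_erase.mp hmem).1 rfl

lemma lemB {k : ℕ} (hk : 2 ≤ k) (lam : Fin k → ℝ)
    (h1 : esymm (k - 1) lam = 0) (h2 : 0 < esymm (k - 2) lam) : esymm k lam ≤ 0 := by
  have hcard : (univ : Finset (Fin k)).card = k := by simp
  set y : Fin k → ℝ := fun i => ∏ l ∈ univ.erase i, lam l with hy
  have hEk : esymm k lam = ∏ l ∈ univ, lam l := by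
    have huniv : Finset.powersetCard k (univ : Finset (Fin k)) = {univ} := by
      ext s
      simp only [Finset.mem_powersetCard, Finset.mem_singleton]
      constructor
      · rintro ⟨hsub, hc⟩
        exact Finset.eq_of_subset_of_card_le hsub (by rw [hcard, hc])
      · rintro rfl
        exact ⟨subset_rfl, hcard⟩
    rw [esymm, huniv]
    simp
  have hAa : esymm (k - 1) lam = ∑ i, y i := by
    rw [esymm, sum_prod_erase lam (show (univ : Finset (Fin k)).card = (k - 1) + 1 by omega)]
  have hBb : ∀ i : Fin k, ∀ j ∈ univ.erase i,
      y i * y j = esymm k lam * ∏ l ∈ (univ.erase i).erase j, lam l := by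
    intro i j hj
    have hji : j ≠ i := (Finset.mem_erase.mp hj).1
    have hij : i ≠ j := fun h => hji h.symm
    have e1 : y i = lam j * ∏ l ∈ (univ.erase i).erase j, lam l :=
      (Finset.mul_prod_erase _ _ hj).symm
    have himem : i ∈ univ.erase j := Finset.mem_erase.mpr ⟨hij, Finset.mem_univ i⟩
    have e2 : y j = lam i * ∏ l ∈ (univ.erase j).erase i, lam l :=
      (Finset.mul_prod_erase _ _ himem).symm
    have e3 : (univ.erase j).erase i = (univ.erase i).erase j := Finset.erase_right_comm
    have e4 : esymm k lam = lam i * (lam j * ∏ l ∈ (univ.erase i).erase j, lam l) := by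
      rw [hEk, ← Finset.mul_prod_erase univ lam (Finset.mem_univ i), ← e1, hy]
    rw [e1, e2, e3, e4]
    ring
  have hCc : ∑ i : Fin k, ∑ j ∈ univ.erase i, ∏ l ∈ (univ.erase i).erase j, lam l
      = 2 * esymm (k - 2) lam := by
    have inner : ∀ i : Fin k, ∑ j ∈ univ.erase i, ∏ l ∈ (univ.erase i).erase j, lam l
        = ∑ t ∈ (univ.erase i).powersetCard (k - 2), ∏ l ∈ t, lam l := by
      intro i
      rw [sum_prod_erase lam (show (univ.erase i).card = (k - 2) + 1 by
        rw [Finset.card_erase_of_mem (Finset.mem_univ i), hcard]; omega)]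
    simp_rw [inner]
    rw [Finset.sum_comm' (s := univ) (t := fun i => (univ.erase i).powersetCard (k - 2))
      (t' := univ.powersetCard (k - 2)) (s' := fun t => tᶜ)
      (by
        intro i t
        simp only [Finset.mem_univ, true_and, Finset.mem_powersetCard, Finset.subset_erase,
          Finset.mem_compl]
        tauto)]
    rw [esymm, Finset.mul_sum]
    apply Finset.sum_congr rfl
    intro t ht
    rw [Finset.sum_const]
    have htc : tᶜ.card = 2 := by
      rw [Finset.card_compl]
      have := (Finset.mem_powersetCard.mp ht).2
      simp [this]
      omega
    rw [htc]
    simp [mul_comm]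
  -- assemble
  have hzero : (0:ℝ) = (∑ i, y i) * (∑ i, y i) := by rw [← hAa, h1]; ring
  have hexp : (∑ i, y i) * (∑ i, y i)
      = (∑ i, y i * y i) + esymm k lam * (2 * esymm (k - 2) lam) := by
    rw [Finset.sum_mul]
    have step : ∀ i : Fin k, y i * (∑ j, y j)
        = y i * y i + ∑ j ∈ univ.erase i, y i * y j := by
      intro i
      rw [← Finset.add_sum_erase univ y (Finset.mem_univ i), mul_add, Finset.mul_sum]
    calc ∑ i, y i * (∑ j, y j)
        = ∑ i, (y i * y i + ∑ j ∈ univ.erase i, y i * y j) := by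
          apply Finset.sum_congr rfl; intro i _; exact step i
      _ = (∑ i, y i * y i) + ∑ i : Fin k, ∑ j ∈ univ.erase i, y i * y j := by
          rw [Finset.sum_add_distrib]
      _ = (∑ i, y i * y i) + esymm k lam * (2 * esymm (k - 2) lam) := by
          congr 1
          rw [← hCc, Finset.mul_sum]
          apply Finset.sum_congr rfl
          intro i _
          rw [Finset.mul_sum]
          apply Finset.sum_congr rfl
          intro j hj
          exact hBb i j hj
  have hsq : (0:ℝ) ≤ ∑ i, y i * y i :=
    Finset.sum_nonneg (fun i _ => mul_self_nonneg _)
  nlinarith [hzero, hexp, hsq, h2]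


lemma coeffId {n : ℕ} (f : Fin n → ℝ) {m : ℕ} (hm : m ≤ n) :
    (∏ l, (X + C (f l))).coeff (n - m) = esymm m f := by
  have hcard : (Finset.univ : Finset (Fin n)).card = n := by simp
  rw [Finset.prod_X_add_C_coeff Finset.univ f (by rw [hcard]; omega), esymm]
  have h1 : #(Finset.univ : Finset (Fin n)) - (n - m) = m := by rw [hcard]; omega
  rw [h1]

lemma path_mem {n k : ℕ} (hk2 : k ≤ n) (κ : Fin n → ℝ) (hκ : κ ∈ GardingCone k)
    {t : ℝ} (ht : 0 ≤ t) : (fun l => κ l + t) ∈ GardingCone k := by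
  intro j hj1 hjk
  have hjn : j ≤ n := le_trans hjk hk2
  have hq_deg : (∏ l, (X + C (κ l))).natDegree = n := by
    rw [Polynomial.natDegree_prod_of_monic _ _ (fun l _ => monic_X_add_C _)]
    simp
  have hcomp : (∏ l, (X + C (κ l + t)))
      = Polynomial.taylor t (∏ l, (X + C (κ l))) := by
    rw [taylor_apply, Polynomial.prod_comp]
    apply Finset.prod_congr rfl
    intro l _
    rw [add_comp, X_comp, C_comp, C_add]
    ring
  have hEnn : ∀ m ≤ j, 0 ≤ esymm m κ := by
    intro m hmj
    rcases Nat.eq_zero_or_pos m with hm | hm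
    · subst hm; simp [esymm_zero']
    · exact le_of_lt (hκ m hm (le_trans hmj hjk))
  have key : esymm j (fun l => κ l + t)
      = ∑ l ∈ Finset.range (j + 1),
          (hasseDeriv (n - j) (∏ l, (X + C (κ l)))).coeff l * t ^ l := by
    rw [← coeffId (fun l => κ l + t) hjn, hcomp, taylor_coeff]
    exact Polynomial.eval_eq_sum_range' (by
      have := Polynomial.natDegree_hasseDeriv_le (∏ l, (X + C (κ l))) (n - j)
      rw [hq_deg] at this
      omega) t
  have hcoeff : ∀ l ≤ j, (hasseDeriv (n - j) (∏ l, (X + C (κ l)))).coeff l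
      = ((l + (n - j)).choose (n - j) : ℝ) * esymm (j - l) κ := by
    intro l hl
    rw [Polynomial.hasseDeriv_coeff]
    congr 1
    have h2 : l + (n - j) = n - (j - l) := by omega
    rw [h2, coeffId κ (by omega)]
  rw [key]
  have hterm : ∀ l ∈ Finset.range (j + 1),
      0 ≤ (hasseDeriv (n - j) (∏ l, (X + C (κ l)))).coeff l * t ^ l := by
    intro l hl
    rw [hcoeff l (by simpa using Nat.lt_succ_iff.mp (Finset.mem_range.mp hl))]
    have := hEnn (j - l) (by omega)
    positivity
  have h0 : (0:ℝ) < (hasseDeriv (n - j) (∏ l, (X + C (κ l)))).coeff 0 * t ^ 0 := by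
    rw [hcoeff 0 (by omega)]
    simp only [Nat.zero_add, Nat.choose_self, Nat.cast_one, one_mul, Nat.sub_zero, pow_zero,
      mul_one, zero_add]
    exact hκ j hj1 hjk
  calc (0:ℝ) < (hasseDeriv (n - j) (∏ l, (X + C (κ l)))).coeff 0 * t ^ 0 := h0
    _ ≤ ∑ l ∈ Finset.range (j + 1),
        (hasseDeriv (n - j) (∏ l, (X + C (κ l)))).coeff l * t ^ l :=
      Finset.single_le_sum hterm (Finset.mem_range.mpr (by omega))


lemma nonvanish {n k : ℕ} (hk : 2 ≤ k) (hk2 : k ≤ n) (κ : Fin n → ℝ)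
    (hκ : κ ∈ GardingCone k) (i : Fin n) (hpos : 0 < esymmDel (k - 2) κ i) :
    esymmDel (k - 1) κ i ≠ 0 := by
  intro h0
  have hkpos : 0 < esymm k κ := hκ k (by omega) le_rfl
  have hsplitk := esymm_split k (by omega) κ i
  have hdelk : esymmDel k κ i ≤ 0 := by
    rcases eq_or_lt_of_le hk2 with he | hlt
    · rw [esymmDel, Finset.powersetCard_eq_empty.mpr (by rw [card_compl_singleton]; omega)]
      simp
    · have hcardS : Multiset.card (({i}ᶜ : Finset (Fin n)).val.map κ) = k + (n - 1 - k) := by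
        rw [Multiset.card_map]
        have h1 : Multiset.card ({i}ᶜ : Finset (Fin n)).val = ({i}ᶜ : Finset (Fin n)).card := rfl
        rw [h1, card_compl_singleton]
        omega
      obtain ⟨u, hcu, hrel⟩ := descend (n - 1 - k) k _ hcardS
      obtain ⟨c1, hc1, he1⟩ := hrel (k - 1) (by omega)
      obtain ⟨c2, hc2, he2⟩ := hrel (k - 2) (by omega)
      obtain ⟨c3, hc3, he3⟩ := hrel k le_rfl
      have hu1 : u.esymm (k - 1) = 0 := by
        rw [he1, ← esymmDel_eq_multiset, h0, mul_zero]
      have hu2 : 0 < u.esymm (k - 2) := by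
        rw [he2, ← esymmDel_eq_multiset]
        positivity
      have hlen : u.toList.length = k := by rw [Multiset.length_toList, hcu]
      have hconv : ∀ j, esymm j u.toList.get = u.esymm j := by
        intro j
        rw [esymm_eq_multiset]
        congr 1
        have huval : (Finset.univ : Finset (Fin u.toList.length)).val
            = ↑(List.finRange u.toList.length) := by rw [Fin.univ_def]
        rw [huval, Multiset.map_coe, List.map_get_finRange, Multiset.coe_toList]
      have hB : esymm u.toList.length u.toList.get ≤ 0 := by
        apply lemB (by omega) u.toList.get
        · rw [hconv, hlen]; exact hu1
        · rw [hconv, hlen]; exact hu2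
      rw [hconv, hlen, he3, ← esymmDel_eq_multiset] at hB
      nlinarith
  rw [h0, mul_zero, add_zero] at hsplitk
  linarith

theorem key (n : ℕ) (hn : 2 ≤ n) : ∀ k, 1 ≤ k → k ≤ n → ∀ κ : Fin n → ℝ,
    κ ∈ GardingCone k → ∀ i : Fin n, 0 < esymmDel (k - 1) κ i := by
  intro k
  induction k using Nat.strong_induction_on with
  | _ k IH =>
  intro hk1 hk2 κ hκ i
  rcases eq_or_lt_of_le hk1 with h1 | h1
  · rw [← h1]
    simp [esymmDel_zero']
  · have hk : 2 ≤ k := h1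
    have hIH : ∀ κ' : Fin n → ℝ, κ' ∈ GardingCone k → 0 < esymmDel (k - 2) κ' i := by
      intro κ' hκ'
      have h2 := IH (k - 1) (by omega) (by omega) (by omega) κ'
        (fun j hj1 hjk => hκ' j hj1 (by omega)) i
      have h3 : k - 1 - 1 = k - 2 := by omega
      rwa [h3] at h2
    have hnv : ∀ κ' : Fin n → ℝ, κ' ∈ GardingCone k → esymmDel (k - 1) κ' i ≠ 0 :=
      fun κ' hκ' => nonvanish hk hk2 κ' hκ' i (hIH κ' hκ')
    set T : ℝ := 1 + ∑ l, |κ l| with hT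
    have hT0 : (0:ℝ) ≤ T := by positivity
    set g : ℝ → ℝ := fun t => esymmDel (k - 1) (fun l => κ l + t) i with hg
    have hg_cont : Continuous g := by
      apply continuous_finset_sum
      intro s _
      apply continuous_finset_prod
      intro j _
      exact continuous_const.add continuous_id
    have hgT : 0 < g T := by
      apply Finset.sum_pos
      · intro s _
        apply Finset.prod_pos
        intro j _
        have h4 : |κ j| ≤ ∑ l, |κ l| :=
          Finset.single_le_sum (fun l _ => abs_nonneg (κ l)) (Finset.mem_univ j)
        have h5 := neg_abs_le (κ j)
        simp only [hT]
        linarith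
      · apply Finset.powersetCard_nonempty_of_le
        rw [card_compl_singleton]
        omega
    have hne : ∀ t ∈ Set.Icc (0:ℝ) T, g t ≠ 0 :=
      fun t ht => hnv _ (path_mem hk2 κ hκ ht.1)
    by_contra hcon
    push_neg at hcon
    have hg0 : g 0 < 0 := by
      have h6 : g 0 = esymmDel (k - 1) κ i := by
        simp only [hg, add_zero]
      rcases lt_or_eq_of_le hcon with h | h
      · rwa [h6]
      · exact absurd (h6.trans h) (hne 0 ⟨le_refl 0, hT0⟩)
    have hmem : (0:ℝ) ∈ Set.Icc (g 0) (g T) := ⟨le_of_lt hg0, le_of_lt hgT⟩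
    obtain ⟨t, ht, hgt⟩ := intermediate_value_Icc hT0 hg_cont.continuousOn hmem
    exact hne t ht hgt

/-- If `κ ∈ Γ_k`, then `σ_{k-1}(κ|i) > 0` for every index `i`. -/
theorem stmt_5 (n k : ℕ) (hn : 2 ≤ n) (hk1 : 1 ≤ k) (hk2 : k ≤ n)
    (κ : Fin n → ℝ) (hκ : κ ∈ GardingCone k) (i : Fin n) :
    0 < esymmDel (k - 1) κ i := by
  exact key n hn k hk1 hk2 κ hκ i
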